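/- Let R be a commutative ring, S ⊆ R a multiplicative set, and suppose R carries an iterative q-difference structure (σ_q, δ^{(k)}) such that σ_q(s) is invertible in S⁻¹R for every s ∈ S. Then S⁻¹R admits a unique iterative q-difference structure such that the localization map R → S⁻¹R commutes with σ_q and all δ^{(k)}. -/

import Mathlib

open Finset

def qBinom {K : Type*} [CommRing K] (q : K) : ℕ → ℕ → K
  | _, 0 => 1
  | 0, _ + 1 => 0
  | n + 1, k + 1 => qBinom q n k + q ^ (k + 1) * qBinom q n (k + 1)

namespace IterQ

structure Data (C R : Type*) [Field C] [CommRing R] [Algebra C R] where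
  q : C
  N : ℕ
  hN : 1 < N
  hq : IsPrimitiveRoot q N
  t : Rˣ
  σ : R ≃+* R
  hσC : ∀ c : C, σ (algebraMap C R c) = algebraMap C R c
  hσt : σ (t : R) = algebraMap C R q * t
  δ : ℕ → R → R
  h0 : ∀ x, δ 0 x = x
  h1 : ∀ x, δ 1 x = algebraMap C R (q - 1)⁻¹ * (↑t⁻¹ : R) * (σ x - x)
  hadd : ∀ k x y, δ k (x + y) = δ k x + δ k y
  hleib : ∀ k x y, δ k (x * y)
      = ∑ i ∈ Finset.range (k + 1), (⇑σ)^[i] (δ (k - i) x) * δ i y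
  hiter : ∀ i j x, δ i (δ j x) = algebraMap C R (qBinom q (i + j) i) * δ (i + j) x
  S : Submonoid R
  hS : ∀ s ∈ S, IsUnit (algebraMap R (Localization S) (σ s))

variable {C R : Type*} [Field C] [CommRing R] [Algebra C R] (D : Data C R)

/-- q ≠ 1 -/
lemma q_ne_one : D.q ≠ 1 := D.hq.ne_one D.hN

lemma qsub_ne : D.q - 1 ≠ 0 := sub_ne_zero.mpr (q_ne_one D)

/-- (q-1) * qBinom q m 1 = q^m - 1 -/
lemma qB_one : ∀ m : ℕ, (D.q - 1) * qBinom D.q m 1 = D.q ^ m - 1 := by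
  intro m
  induction m with
  | zero => simp [qBinom]
  | succ m ih =>
      have hdef : qBinom D.q (m+1) 1 = qBinom D.q m 0 + D.q ^ (0+1) * qBinom D.q m (0+1) := rfl
      have hz : qBinom D.q m 0 = 1 := by cases m <;> rfl
      rw [hdef, hz]
      simp only [zero_add, pow_one]
      linear_combination D.q * ih

/-- δ k 0 = 0 -/
lemma δ_zero (k : ℕ) : D.δ k 0 = 0 := by
  have := D.hadd k 0 0
  simpa using this.symm

/-- iterates of σ -/
lemma σ_iter_mul (n : ℕ) (x y : R) : (⇑D.σ)^[n] (x * y) = (⇑D.σ)^[n] x * (⇑D.σ)^[n] y := by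
  induction n with
  | zero => rfl
  | succ n ih => rw [Function.iterate_succ_apply', Function.iterate_succ_apply',
      Function.iterate_succ_apply', ih, map_mul]

lemma σ_iter_add (n : ℕ) (x y : R) : (⇑D.σ)^[n] (x + y) = (⇑D.σ)^[n] x + (⇑D.σ)^[n] y := by
  induction n with
  | zero => rfl
  | succ n ih => rw [Function.iterate_succ_apply', Function.iterate_succ_apply',
      Function.iterate_succ_apply', ih, map_add]

lemma σ_iter_one (n : ℕ) : (⇑D.σ)^[n] (1 : R) = 1 := by
  induction n with
  | zero => rfl
  | succ n ih => rw [Function.iterate_succ_apply', ih, map_one]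

lemma σ_iter_zero (n : ℕ) : (⇑D.σ)^[n] (0 : R) = 0 := by
  induction n with
  | zero => rfl
  | succ n ih => rw [Function.iterate_succ_apply', ih, map_zero]

lemma σ_iter_algC (n : ℕ) (c : C) :
    (⇑D.σ)^[n] (algebraMap C R c) = algebraMap C R c := by
  induction n with
  | zero => rfl
  | succ n ih => rw [Function.iterate_succ_apply', ih, D.hσC]

lemma σ_iter_sum (n : ℕ) {ι : Type*} (s : Finset ι) (f : ι → R) :
    (⇑D.σ)^[n] (∑ i ∈ s, f i) = ∑ i ∈ s, (⇑D.σ)^[n] (f i) := by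
  induction s using Finset.cons_induction with
  | empty => simpa using σ_iter_zero D n
  | cons a s ha ih => rw [Finset.sum_cons, Finset.sum_cons, σ_iter_add D, ih]

/-- δ k 1 = 0 for k ≥ 1 -/
lemma δ_one : ∀ k : ℕ, 1 ≤ k → D.δ k 1 = 0 := by
  intro k
  induction k using Nat.strong_induction_on with
  | _ k ih =>
    intro hk
    obtain ⟨m, rfl⟩ : ∃ m, k = m + 1 := ⟨k - 1, by omega⟩
    have h := D.hleib (m+1) 1 1
    rw [one_mul] at h
    rw [Finset.sum_range_succ, Finset.sum_range_succ'] at h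
    have hmid : ∑ i ∈ Finset.range m, (⇑D.σ)^[i+1] (D.δ (m + 1 - (i+1)) 1) * D.δ (i+1) 1 = 0 := by
      apply Finset.sum_eq_zero
      intro i hi
      rw [ih (i+1) (by have := Finset.mem_range.mp hi; omega) (by omega)]
      ring
    rw [hmid] at h
    simp only [Nat.sub_self, D.h0, Nat.sub_zero, Function.iterate_zero_apply, σ_iter_one] at h
    -- h : δ (m+1) 1 = 0 + δ (m+1) 1 * 1 + 1 * δ (m+1) 1
    have h2 : D.δ (m+1) 1 + D.δ (m+1) 1 = D.δ (m+1) 1 + 0 := by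
      conv_rhs => rw [add_zero]; rw [h]
      ring
    exact (add_left_cancel h2)

/-- σ x = x + (q-1) t δ¹ x -/
lemma σ_of (x : R) : D.σ x = x + algebraMap C R (D.q - 1) * (D.t : R) * D.δ 1 x := by
  rw [D.h1]
  have h1 : algebraMap C R (D.q - 1) * algebraMap C R (D.q - 1)⁻¹ = 1 := by
    rw [← map_mul, mul_inv_cancel₀ (qsub_ne D), map_one]
  have h2 : (D.t : R) * (↑D.t⁻¹ : R) = 1 := D.t.mul_inv
  calc D.σ x = x + (algebraMap C R (D.q - 1) * algebraMap C R (D.q - 1)⁻¹)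
        * ((D.t : R) * (↑D.t⁻¹ : R)) * (D.σ x - x) := by rw [h1, h2]; ring
    _ = x + algebraMap C R (D.q - 1) * (D.t : R)
        * (algebraMap C R (D.q - 1)⁻¹ * (↑D.t⁻¹ : R) * (D.σ x - x)) := by ring


section Coeff
variable {C' : Type*} [Field C'] (q : C')
/-- triangular exponent -/
def ebin : ℕ → ℕ
  | 0 => 0
  | k+1 => ebin k + k

/-- coefficients of σ^n in terms of the δ's -/
def cc (q : C') (n k : ℕ) : C' := q ^ ebin k * ∏ i ∈ range k, (q ^ (n - i) - 1)

lemma cc_zero (n : ℕ) : cc q n 0 = 1 := by simp [cc, ebin]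

lemma cc_overflow {n k : ℕ} (h : n < k) : cc q n k = 0 := by
  unfold cc
  rw [Finset.prod_eq_zero (Finset.mem_range.mpr h) (by simp), mul_zero]

lemma cc_rec (n k : ℕ) :
    cc q (n+1) (k+1) = q ^ (k+1) * cc q n (k+1) + q ^ k * (q ^ (k+1) - 1) * cc q n k := by
  rcases Nat.lt_or_ge n k with hnk | hnk
  · -- degenerate: all terms vanish
    rw [cc_overflow (q := q) (n := n+1) (k := k+1) (by omega),
        cc_overflow (q := q) (n := n) (k := k+1) (by omega),
        cc_overflow (q := q) (n := n) (k := k) (by omega)]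
    ring
  · -- main case k ≤ n
    have e1 : ebin (k+1) = ebin k + k := rfl
    have hprod : ∏ i ∈ range (k+1), (q ^ (n + 1 - i) - 1)
        = (∏ i ∈ range k, (q ^ (n - i) - 1)) * (q ^ (n+1) - 1) := by
      rw [Finset.prod_range_succ']
      congr 1
      · apply Finset.prod_congr rfl
        intro i _
        have : n + 1 - (i + 1) = n - i := by omega
        rw [this]
    have hprod2 : ∏ i ∈ range (k+1), (q ^ (n - i) - 1)
        = (∏ i ∈ range k, (q ^ (n - i) - 1)) * (q ^ (n - k) - 1) :=
      Finset.prod_range_succ _ _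
    unfold cc
    rw [e1, hprod, hprod2]
    have hpow : q ^ (k+1) * q ^ (n - k) = q ^ (n+1) := by
      rw [← pow_add]; congr 1; omega
    have hpow2 : q ^ (ebin k + k) = q ^ ebin k * q ^ k := by rw [pow_add]
    rw [hpow2]
    linear_combination (-(q ^ ebin k * q ^ k * ∏ i ∈ range k, (q ^ (n - i) - 1))) * hpow


end Coeff

lemma cc_top {k : ℕ} (hk : 1 ≤ k) : cc D.q D.N k = 0 := by
  unfold cc
  rw [Finset.prod_eq_zero (Finset.mem_range.mpr (by omega : 0 < k))
    (by simp [D.hq.pow_eq_one]), mul_zero]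

/-- the expansion of σ^n in terms of the iterative q-difference operators -/
lemma σ_iter_formula (n : ℕ) (x : R) :
    (⇑D.σ)^[n] x = ∑ k ∈ range (n+1),
      algebraMap C R (cc D.q n k) * (D.t : R)^k * D.δ k x := by
  induction n with
  | zero =>
      simp [cc_zero, D.h0]
  | succ n ih =>
      have hσterm : ∀ k, D.σ (algebraMap C R (cc D.q n k) * (D.t : R)^k * D.δ k x)
          = algebraMap C R (D.q ^ k * cc D.q n k) * (D.t : R)^k * D.δ k x
            + algebraMap C R (D.q ^ k * (D.q ^ (k+1) - 1) * cc D.q n k)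
              * (D.t : R)^(k+1) * D.δ (k+1) x := by
        intro k
        rw [map_mul, map_mul, D.hσC, map_pow, D.hσt, σ_of D (D.δ k x)]
        have hit : D.δ 1 (D.δ k x) = algebraMap C R (qBinom D.q (1 + k) 1) * D.δ (1 + k) x :=
          D.hiter 1 k x
        rw [hit]
        have h1k : 1 + k = k + 1 := by omega
        rw [h1k]
        have hqb : algebraMap C R (D.q - 1) * algebraMap C R (qBinom D.q (k+1) 1)
            = algebraMap C R (D.q ^ (k+1) - 1) := by
          rw [← map_mul, qB_one D (k+1)]
        have expand : (algebraMap C R D.q * ↑D.t) ^ k = algebraMap C R (D.q ^ k) * (D.t:R)^k := by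
          rw [mul_pow, map_pow]
        rw [expand]
        calc algebraMap C R (cc D.q n k) * (algebraMap C R (D.q ^ k) * (D.t:R) ^ k) *
              (D.δ k x + algebraMap C R (D.q - 1) * ↑D.t *
                (algebraMap C R (qBinom D.q (k+1) 1) * D.δ (k+1) x))
            = algebraMap C R (D.q ^ k * cc D.q n k) * (D.t:R)^k * D.δ k x
              + (algebraMap C R (D.q - 1) * algebraMap C R (qBinom D.q (k+1) 1)) *
                algebraMap C R (D.q ^ k * cc D.q n k) * (D.t:R)^(k+1) * D.δ (k+1) x := by
              simp only [map_mul]; ring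
          _ = _ := by rw [hqb, map_mul, map_mul, map_mul]; ring
      rw [Function.iterate_succ_apply', ih, map_sum]
      have hsum : ∑ k ∈ range (n+1), D.σ (algebraMap C R (cc D.q n k) * (D.t : R)^k * D.δ k x)
          = (∑ k ∈ range (n+1), algebraMap C R (D.q ^ k * cc D.q n k) * (D.t : R)^k * D.δ k x)
            + ∑ k ∈ range (n+1), algebraMap C R (D.q ^ k * (D.q ^ (k+1) - 1) * cc D.q n k)
              * (D.t : R)^(k+1) * D.δ (k+1) x := by
        rw [← Finset.sum_add_distrib]
        exact Finset.sum_congr rfl (fun k _ => hσterm k)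
      rw [hsum]
      set g : ℕ → R := fun k => algebraMap C R (D.q ^ k * cc D.q n k) * (D.t : R)^k * D.δ k x
        with hg
      have hg0 : g 0 = x := by simp [hg, cc_zero, D.h0]
      have hgtop : g (n+1) = 0 := by
        simp [hg, cc_overflow (q := D.q) (n := n) (k := n+1) (by omega)]
      have htarget : ∑ k ∈ range (n+1+1),
          algebraMap C R (cc D.q (n+1) k) * (D.t : R)^k * D.δ k x
          = (∑ k ∈ range (n+1), g k)
            + ∑ k ∈ range (n+1), algebraMap C R (D.q ^ k * (D.q ^ (k+1) - 1) * cc D.q n k)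
              * (D.t : R)^(k+1) * D.δ (k+1) x := by
        rw [Finset.sum_range_succ']
        have hstep : ∀ k, algebraMap C R (cc D.q (n+1) (k+1)) * (D.t : R)^(k+1) * D.δ (k+1) x
            = g (k+1) + algebraMap C R (D.q ^ k * (D.q ^ (k+1) - 1) * cc D.q n k)
              * (D.t : R)^(k+1) * D.δ (k+1) x := by
          intro k
          rw [hg]
          simp only
          rw [cc_rec, map_add]
          ring
        have hsplit : ∑ k ∈ range (n+1),
            algebraMap C R (cc D.q (n+1) (k+1)) * (D.t : R)^(k+1) * D.δ (k+1) x
            = (∑ k ∈ range (n+1), g (k+1))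
              + ∑ k ∈ range (n+1), algebraMap C R (D.q ^ k * (D.q ^ (k+1) - 1) * cc D.q n k)
                * (D.t : R)^(k+1) * D.δ (k+1) x := by
          rw [← Finset.sum_add_distrib]
          exact Finset.sum_congr rfl (fun k _ => hstep k)
        rw [hsplit]
        have hzero : algebraMap C R (cc D.q (n+1) 0) * (D.t : R)^0 * D.δ 0 x = x := by
          simp [cc_zero, D.h0]
        rw [hzero]
        have hshift : ∑ k ∈ range (n+1), g (k+1) = (∑ k ∈ range (n+1), g k) - x := by
          have e1 : ∑ k ∈ range (n+2), g k = (∑ k ∈ range (n+1), g (k+1)) + g 0 :=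
            Finset.sum_range_succ' g (n+1)
          have e2 : ∑ k ∈ range (n+2), g k = (∑ k ∈ range (n+1), g k) + g (n+1) :=
            Finset.sum_range_succ g (n+1)
          rw [hg0] at e1; rw [hgtop] at e2
          have e3 := e1.symm.trans e2
          rw [eq_sub_iff_add_eq]
          rw [add_zero] at e3
          exact e3
        rw [hshift]
        ring
      rw [htarget]

/-- σ has order dividing N -/
lemma σ_iter_N (x : R) : (⇑D.σ)^[D.N] x = x := by
  rw [σ_iter_formula]
  rw [Finset.sum_range_succ']
  have hmid : ∑ k ∈ range D.N,
      algebraMap C R (cc D.q D.N (k+1)) * (D.t : R)^(k+1) * D.δ (k+1) x = 0 := by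
    apply Finset.sum_eq_zero
    intro k _
    rw [cc_top D (by omega)]
    simp
  rw [hmid]
  simp [cc_zero, D.h0]

lemma σ_symm_eq (x : R) : D.σ.symm x = (⇑D.σ)^[D.N - 1] x := by
  apply D.σ.injective
  rw [RingEquiv.apply_symm_apply, ← Function.iterate_succ_apply' (⇑D.σ) (D.N - 1) x]
  have hNe : (D.N - 1).succ = D.N := by have := D.hN; omega
  rw [hNe, σ_iter_N]


section Conv

variable {A : Type*} [CommRing A]

/-- twisted-convolution product on double sequences -/
def Amul (f g : ℕ → ℕ → A) : ℕ → ℕ → A :=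
  fun n k => ∑ i ∈ range (k+1), f (n+i) (k-i) * g n i

def Aone : ℕ → ℕ → A := fun _ k => if k = 0 then 1 else 0

lemma sum_triangle {M : Type*} [AddCommMonoid M] (k : ℕ) (F : ℕ → ℕ → M) :
    ∑ i ∈ range (k+1), ∑ j ∈ range (k-i+1), F i j
      = ∑ a ∈ range (k+1), ∑ i ∈ range (a+1), F i (a-i) := by
  rw [Finset.sum_sigma', Finset.sum_sigma']
  apply Finset.sum_nbij' (i := fun p => (⟨p.1 + p.2, p.1⟩ : Σ _ : ℕ, ℕ))
    (j := fun p => (⟨p.2, p.1 - p.2⟩ : Σ _ : ℕ, ℕ))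
  · intro p hp
    simp only [Finset.mem_sigma, Finset.mem_range] at *
    omega
  · intro p hp
    simp only [Finset.mem_sigma, Finset.mem_range] at *
    omega
  · intro p hp
    obtain ⟨a, b⟩ := p
    simp only [Finset.mem_sigma, Finset.mem_range] at hp
    show (⟨a, a + b - a⟩ : Σ _ : ℕ, ℕ) = ⟨a, b⟩
    have e : a + b - a = b := by omega
    exact congrArg (Sigma.mk a) e
  · intro p hp
    obtain ⟨a, b⟩ := p
    simp only [Finset.mem_sigma, Finset.mem_range] at hp
    show (⟨b + (a - b), b⟩ : Σ _ : ℕ, ℕ) = ⟨a, b⟩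
    have e : b + (a - b) = a := by omega
    exact congrArg (fun x => (⟨x, b⟩ : Σ _ : ℕ, ℕ)) e
  · intro p hp
    simp only [Finset.mem_sigma, Finset.mem_range] at hp
    rcases p with ⟨a, b⟩
    simp only
    congr 1
    omega

lemma Amul_assoc (f g h : ℕ → ℕ → A) : Amul (Amul f g) h = Amul f (Amul g h) := by
  funext n k
  show ∑ i ∈ range (k+1), (Amul f g) (n+i) (k-i) * h n i
      = ∑ a ∈ range (k+1), f (n+a) (k-a) * (Amul g h) n a
  unfold Amul
  have lhs : ∑ i ∈ range (k+1), (∑ j ∈ range (k-i+1), f (n+i+j) (k-i-j) * g (n+i) j) * h n i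
      = ∑ i ∈ range (k+1), ∑ j ∈ range (k-i+1), f (n+i+j) (k-i-j) * g (n+i) j * h n i := by
    apply Finset.sum_congr rfl
    intro i _
    rw [Finset.sum_mul]
  rw [lhs]
  have rhs : ∑ a ∈ range (k+1), f (n+a) (k-a) * ∑ i ∈ range (a+1), g (n+i) (a-i) * h n i
      = ∑ a ∈ range (k+1), ∑ i ∈ range (a+1), f (n+a) (k-a) * (g (n+i) (a-i) * h n i) := by
    apply Finset.sum_congr rfl
    intro a _
    rw [Finset.mul_sum]
  rw [rhs]
  rw [sum_triangle k (fun i j => f (n+i+j) (k-i-j) * g (n+i) j * h n i)]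
  apply Finset.sum_congr rfl
  intro a ha
  apply Finset.sum_congr rfl
  intro i hi
  have ha' := Finset.mem_range.mp ha
  have hi' := Finset.mem_range.mp hi
  have e1 : n + i + (a - i) = n + a := by omega
  have e2 : k - i - (a - i) = k - a := by omega
  rw [e1, e2]
  ring

lemma Amul_one (f : ℕ → ℕ → A) : Amul f Aone = f := by
  funext n k
  show ∑ i ∈ range (k+1), f (n+i) (k-i) * Aone n i = f n k
  rw [Finset.sum_eq_single 0]
  · simp [Aone]
  · intro i _ hi
    simp [Aone, hi]
  · intro h
    exact absurd (Finset.mem_range.mpr (by omega)) h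

lemma one_Amul (f : ℕ → ℕ → A) : Amul Aone f = f := by
  funext n k
  show ∑ i ∈ range (k+1), Aone (n+i) (k-i) * f n i = f n k
  rw [Finset.sum_eq_single k]
  · simp [Aone]
  · intro i hi hne
    have : ¬ (k - i = 0) := by
      have := Finset.mem_range.mp hi
      omega
    simp [Aone, this]
  · intro h
    exact absurd (Finset.mem_range.mpr (by omega)) h

lemma Amul_add (f g h : ℕ → ℕ → A) : Amul f (g + h) = Amul f g + Amul f h := by
  funext n k
  show ∑ i ∈ range (k+1), f (n+i) (k-i) * (g n i + h n i)
      = (∑ i ∈ range (k+1), f (n+i) (k-i) * g n i) + ∑ i ∈ range (k+1), f (n+i) (k-i) * h n i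
  rw [← Finset.sum_add_distrib]
  exact Finset.sum_congr rfl fun i _ => mul_add _ _ _

lemma add_Amul (f g h : ℕ → ℕ → A) : Amul (f + g) h = Amul f h + Amul g h := by
  funext n k
  show ∑ i ∈ range (k+1), (f (n+i) (k-i) + g (n+i) (k-i)) * h n i
      = (∑ i ∈ range (k+1), f (n+i) (k-i) * h n i) + ∑ i ∈ range (k+1), g (n+i) (k-i) * h n i
  rw [← Finset.sum_add_distrib]
  exact Finset.sum_congr rfl fun i _ => add_mul _ _ _

/-- right inverse along the filtration -/
noncomputable def AinvAux (f : ℕ → ℕ → A) : ℕ → ℕ → A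
  | 0 => fun n => Ring.inverse (f n 0)
  | (k+1) => fun n => - (Ring.inverse (f (n+(k+1)) 0)) *
      ∑ i ∈ (range (k+1)).attach, f (n + i.1) (k+1-i.1) * AinvAux f i.1 n
  decreasing_by exact Finset.mem_range.mp i.2

noncomputable def Ainv (f : ℕ → ℕ → A) : ℕ → ℕ → A := fun n k => AinvAux f k n

lemma Amul_Ainv {f : ℕ → ℕ → A} (hf : ∀ n, IsUnit (f n 0)) : Amul f (Ainv f) = Aone := by
  funext n k
  cases k with
  | zero =>
      show ∑ i ∈ range 1, f (n+i) (0-i) * Ainv f n i = Aone n 0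
      simp only [Finset.sum_range_one, add_zero, Nat.zero_sub]
      show f n 0 * AinvAux f 0 n = Aone n 0
      simp [AinvAux, Ring.mul_inverse_cancel _ (hf n), Aone]
  | succ k =>
      show ∑ i ∈ range (k+1+1), f (n+i) (k+1-i) * Ainv f n i = Aone n (k+1)
      rw [Finset.sum_range_succ]
      have htop : f (n+(k+1)) (k+1-(k+1)) * Ainv f n (k+1)
          = - ∑ i ∈ range (k+1), f (n + i) (k+1-i) * AinvAux f i n := by
        show f (n+(k+1)) (k+1-(k+1)) * AinvAux f (k+1) n = _
        rw [AinvAux]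
        beta_reduce
        rw [Finset.sum_attach (range (k+1)) (fun i => f (n + i) (k+1-i) * AinvAux f i n)]
        have e0 : k+1-(k+1) = 0 := by omega
        rw [e0]
        linear_combination (-(∑ i ∈ range (k+1), f (n + i) (k+1-i) * AinvAux f i n))
          * (Ring.mul_inverse_cancel _ (hf (n+(k+1))))
      rw [htop]
      have : ∑ i ∈ range (k+1), f (n+i) (k+1-i) * Ainv f n i
          = ∑ i ∈ range (k+1), f (n + i) (k+1-i) * AinvAux f i n := rfl
      rw [this]
      simp [Aone]

/-- left inverse along the filtration -/
noncomputable def AinvAux' (f : ℕ → ℕ → A) : ℕ → ℕ → A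
  | 0 => fun n => Ring.inverse (f n 0)
  | (k+1) => fun n => - (∑ i ∈ (range (k+1)).attach,
        AinvAux' f (k - i.1) (n + i.1 + 1) * f n (i.1+1)) * Ring.inverse (f n 0)
  decreasing_by exact Nat.lt_succ_of_le (Nat.sub_le k i.1)

noncomputable def Ainv' (f : ℕ → ℕ → A) : ℕ → ℕ → A := fun n k => AinvAux' f k n

lemma Ainv'_Amul {f : ℕ → ℕ → A} (hf : ∀ n, IsUnit (f n 0)) : Amul (Ainv' f) f = Aone := by
  funext n k
  cases k with
  | zero =>
      show ∑ i ∈ range 1, Ainv' f (n+i) (0-i) * f n i = Aone n 0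
      simp only [Finset.sum_range_one, add_zero, Nat.zero_sub]
      show AinvAux' f 0 n * f n 0 = Aone n 0
      simp [AinvAux', Ring.inverse_mul_cancel _ (hf n), Aone]
  | succ k =>
      show ∑ i ∈ range (k+1+1), Ainv' f (n+i) (k+1-i) * f n i = Aone n (k+1)
      rw [Finset.sum_range_succ']
      have hbot : Ainv' f (n+0) (k+1-0) * f n 0
          = - ∑ i ∈ range (k+1), AinvAux' f (k-i) (n+i+1) * f n (i+1) := by
        show AinvAux' f (k+1) n * f n 0 = _
        rw [AinvAux']
        beta_reduce
        rw [Finset.sum_attach (range (k+1)) (fun i => AinvAux' f (k-i) (n+i+1) * f n (i+1))]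
        linear_combination (-(∑ i ∈ range (k+1), AinvAux' f (k-i) (n+i+1) * f n (i+1)))
          * (Ring.inverse_mul_cancel _ (hf n))
      rw [hbot]
      have : ∑ i ∈ range (k+1), Ainv' f (n+(i+1)) (k+1-(i+1)) * f n (i+1)
          = ∑ i ∈ range (k+1), AinvAux' f (k-i) (n+i+1) * f n (i+1) := by
        apply Finset.sum_congr rfl
        intro i _
        have e1 : k+1-(i+1) = k - i := by omega
        have e2 : n+(i+1) = n+i+1 := by omega
        rw [e1, e2]
        rfl
      rw [this]
      simp [Aone]

lemma Ainv_eq_Ainv' {f : ℕ → ℕ → A} (hf : ∀ n, IsUnit (f n 0)) : Ainv f = Ainv' f := by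
  calc Ainv f = Amul Aone (Ainv f) := (one_Amul _).symm
    _ = Amul (Amul (Ainv' f) f) (Ainv f) := by rw [Ainv'_Amul hf]
    _ = Amul (Ainv' f) (Amul f (Ainv f)) := Amul_assoc _ _ _
    _ = Amul (Ainv' f) Aone := by rw [Amul_Ainv hf]
    _ = Ainv' f := Amul_one _

lemma Ainv_Amul {f : ℕ → ℕ → A} (hf : ∀ n, IsUnit (f n 0)) : Amul (Ainv f) f = Aone := by
  rw [Ainv_eq_Ainv' hf]
  exact Ainv'_Amul hf

/-- cancellation against an invertible element -/
lemma Amul_cancel {f x y : ℕ → ℕ → A} (hf : ∀ n, IsUnit (f n 0))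
    (h : Amul x f = Amul y f) : x = y := by
  calc x = Amul x Aone := (Amul_one x).symm
    _ = Amul x (Amul f (Ainv f)) := by rw [Amul_Ainv hf]
    _ = Amul (Amul x f) (Ainv f) := (Amul_assoc _ _ _).symm
    _ = Amul (Amul y f) (Ainv f) := by rw [h]
    _ = Amul y (Amul f (Ainv f)) := Amul_assoc _ _ _
    _ = Amul y Aone := by rw [Amul_Ainv hf]
    _ = y := Amul_one y

end Conv


section IterHelp

variable {A : Type*} [CommRing A] (e : A ≃+* A)

lemma eqv_iter_mul (n : ℕ) (x y : A) : (⇑e)^[n] (x * y) = (⇑e)^[n] x * (⇑e)^[n] y := by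
  induction n with
  | zero => rfl
  | succ n ih => rw [Function.iterate_succ_apply', Function.iterate_succ_apply',
      Function.iterate_succ_apply', ih, map_mul]

lemma eqv_iter_add (n : ℕ) (x y : A) : (⇑e)^[n] (x + y) = (⇑e)^[n] x + (⇑e)^[n] y := by
  induction n with
  | zero => rfl
  | succ n ih => rw [Function.iterate_succ_apply', Function.iterate_succ_apply',
      Function.iterate_succ_apply', ih, map_add]

lemma eqv_iter_one (n : ℕ) : (⇑e)^[n] (1 : A) = 1 := by
  induction n with
  | zero => rfl
  | succ n ih => rw [Function.iterate_succ_apply', ih, map_one]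

lemma eqv_iter_zero (n : ℕ) : (⇑e)^[n] (0 : A) = 0 := by
  induction n with
  | zero => rfl
  | succ n ih => rw [Function.iterate_succ_apply', ih, map_zero]

lemma eqv_iter_sum (n : ℕ) {ι : Type*} (s : Finset ι) (f : ι → A) :
    (⇑e)^[n] (∑ i ∈ s, f i) = ∑ i ∈ s, (⇑e)^[n] (f i) := by
  induction s using Finset.cons_induction with
  | empty => simpa using eqv_iter_zero e n
  | cons a s ha ih => rw [Finset.sum_cons, Finset.sum_cons, eqv_iter_add e, ih]

end IterHelp

/-- localization map -/
abbrev lm (D : Data C R) : R →+* Localization D.S := algebraMap R (Localization D.S)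

lemma exists_rep (z : Localization D.S) :
    ∃ a s, s ∈ D.S ∧ lm D s * z = lm D a := by
  refine ⟨(IsLocalization.sec D.S z).1, (IsLocalization.sec D.S z).2, (IsLocalization.sec D.S z).2.2, ?_⟩
  rw [mul_comm]
  exact IsLocalization.sec_spec D.S z

/-- lift of σ -/
noncomputable def σ0 (D : Data C R) : Localization D.S →+* Localization D.S :=
  IsLocalization.lift (M := D.S) (g := (lm D).comp D.σ.toRingHom)
    (fun s => D.hS s.1 s.2)

lemma σ0_alg (x : R) : σ0 D (lm D x) = lm D (D.σ x) := by
  unfold σ0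
  exact IsLocalization.lift_eq _ x

lemma units_iter (n : ℕ) {s : R} (hs : s ∈ D.S) :
    IsUnit (lm D ((⇑D.σ)^[n] s)) := by
  induction n with
  | zero => exact IsLocalization.map_units _ (⟨s, hs⟩ : D.S)
  | succ n ih =>
      rw [Function.iterate_succ_apply', ← σ0_alg]
      exact ih.map (σ0 D)

/-- lift of σ⁻¹ -/
noncomputable def τ0 (D : Data C R) : Localization D.S →+* Localization D.S :=
  IsLocalization.lift (M := D.S) (g := (lm D).comp D.σ.symm.toRingHom)
    (fun s => by
      have : (lm D).comp D.σ.symm.toRingHom s.1 = lm D (D.σ.symm s.1) := rfl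
      rw [this, σ_symm_eq]
      exact units_iter D _ s.2)

lemma τ0_alg (x : R) : τ0 D (lm D x) = lm D (D.σ.symm x) := by
  unfold τ0
  rw [IsLocalization.lift_eq]
  rfl

/-- the extended automorphism on the localization -/
noncomputable def σL (D : Data C R) : Localization D.S ≃+* Localization D.S :=
  (fun (h₂ : (τ0 D).comp (σ0 D) = RingHom.id _) (h₁ : (σ0 D).comp (τ0 D) = RingHom.id _) =>
    RingEquiv.ofRingHom (σ0 D) (τ0 D) h₁ h₂)
    (by
      apply IsLocalization.ringHom_ext D.S
      ext x
      simp only [RingHom.coe_comp, Function.comp_apply, RingHom.id_apply]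
      show (τ0 D) ((σ0 D) (lm D x)) = lm D x
      rw [σ0_alg, τ0_alg, RingEquiv.symm_apply_apply])
    (by
      apply IsLocalization.ringHom_ext D.S
      ext x
      simp only [RingHom.coe_comp, Function.comp_apply, RingHom.id_apply]
      show (σ0 D) ((τ0 D) (lm D x)) = lm D x
      rw [τ0_alg, σ0_alg, RingEquiv.apply_symm_apply])

lemma σL_alg (x : R) : σL D (lm D x) = lm D (D.σ x) := σ0_alg D x

lemma σL_iter_alg (m : ℕ) (x : R) :
    (⇑(σL D))^[m] (lm D x) = lm D ((⇑D.σ)^[m] x) := by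
  induction m with
  | zero => rfl
  | succ m ih => rw [Function.iterate_succ_apply', Function.iterate_succ_apply', ih, σL_alg]

/-- the structure map into the convolution algebra -/
def Th (D : Data C R) (x : R) : ℕ → ℕ → Localization D.S :=
  fun n k => lm D ((⇑D.σ)^[n] (D.δ k x))

lemma Th_mul (x y : R) : Th D (x * y) = Amul (Th D x) (Th D y) := by
  funext n k
  show lm D ((⇑D.σ)^[n] (D.δ k (x*y))) = ∑ i ∈ range (k+1), Th D x (n+i) (k-i) * Th D y n i
  rw [D.hleib k x y, σ_iter_sum, map_sum]
  apply Finset.sum_congr rfl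
  intro i _
  rw [σ_iter_mul, ← Function.iterate_add_apply, map_mul]
  rfl

lemma Th_add (x y : R) : Th D (x + y) = Th D x + Th D y := by
  funext n k
  show lm D ((⇑D.σ)^[n] (D.δ k (x+y))) = Th D x n k + Th D y n k
  rw [D.hadd, σ_iter_add, map_add]
  rfl

lemma Th_one : Th D 1 = Aone := by
  funext n k
  show lm D ((⇑D.σ)^[n] (D.δ k 1)) = Aone n k
  cases k with
  | zero => simp [D.h0, σ_iter_one, Aone]
  | succ k => simp [δ_one D (k+1) (by omega), σ_iter_zero, Aone]

lemma Th_zero : Th D 0 = 0 := by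
  funext n k
  show lm D ((⇑D.σ)^[n] (D.δ k 0)) = 0
  rw [δ_zero, σ_iter_zero, map_zero]

lemma Th_units {s : R} (hs : s ∈ D.S) : ∀ n, IsUnit (Th D s n 0) := by
  intro n
  show IsUnit (lm D ((⇑D.σ)^[n] (D.δ 0 s)))
  rw [D.h0]
  exact units_iter D n hs

lemma Th_comm (x y : R) : Amul (Th D x) (Th D y) = Amul (Th D y) (Th D x) := by
  rw [← Th_mul, ← Th_mul, mul_comm]

/-- commuting with inverses -/
lemma Acomm_inv {A : Type*} [CommRing A] {f g : ℕ → ℕ → A} (hg : ∀ n, IsUnit (g n 0))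
    (h : Amul f g = Amul g f) : Amul f (Ainv g) = Amul (Ainv g) f := by
  have c1 : Amul (Ainv g) f = Amul (Ainv g) (Amul f (Amul g (Ainv g))) := by
    rw [Amul_Ainv hg, Amul_one]
  rw [c1, ← Amul_assoc f g (Ainv g), h, Amul_assoc g f (Ainv g), ← Amul_assoc (Ainv g) g _,
    Ainv_Amul hg, one_Amul]

lemma Acomm_mul {A : Type*} [CommRing A] {f g h : ℕ → ℕ → A}
    (h1 : Amul f g = Amul g f) (h2 : Amul f h = Amul h f) :
    Amul f (Amul g h) = Amul (Amul g h) f := by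
  rw [← Amul_assoc, h1, Amul_assoc, h2, ← Amul_assoc]

lemma Amul_exchange {A : Type*} [CommRing A] {a b c d : ℕ → ℕ → A}
    (hbc : Amul b c = Amul c b) :
    Amul (Amul a b) (Amul c d) = Amul (Amul a c) (Amul b d) := by
  rw [Amul_assoc a b (Amul c d), ← Amul_assoc b c d, hbc, Amul_assoc c b d,
    ← Amul_assoc a c (Amul b d)]

lemma Amul_cancel_left {A : Type*} [CommRing A] {f x y : ℕ → ℕ → A}
    (hf : ∀ n, IsUnit (f n 0)) (h : Amul f x = Amul f y) : x = y := by
  calc x = Amul Aone x := (one_Amul x).symm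
    _ = Amul (Amul (Ainv f) f) x := by rw [Ainv_Amul hf]
    _ = Amul (Ainv f) (Amul f x) := Amul_assoc _ _ _
    _ = Amul (Ainv f) (Amul f y) := by rw [h]
    _ = Amul (Amul (Ainv f) f) y := (Amul_assoc _ _ _).symm
    _ = Amul Aone y := by rw [Ainv_Amul hf]
    _ = y := one_Amul y

/-- the extended structure map on the localization -/
noncomputable def ThL (D : Data C R) (z : Localization D.S) : ℕ → ℕ → Localization D.S :=
  Amul (Th D (IsLocalization.sec D.S z).1) (Ainv (Th D ((IsLocalization.sec D.S z).2 : R)))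

lemma ThL_spec {z : Localization D.S} {a s : R} (hs : s ∈ D.S)
    (h : z * lm D s = lm D a) : Amul (ThL D z) (Th D s) = Th D a := by
  set a0 := (IsLocalization.sec D.S z).1 with ha0
  set s0 := (IsLocalization.sec D.S z).2 with hs0
  have hspec : z * lm D (s0 : R) = lm D a0 := IsLocalization.sec_spec D.S z
  have halg : lm D (a * (s0 : R)) = lm D (a0 * s) := by
    rw [map_mul, map_mul, ← h, ← hspec]
    ring
  obtain ⟨c, hc⟩ := (IsLocalization.eq_iff_exists D.S _).mp halg
  have hTh : Amul (Th D (c : R)) (Amul (Th D a) (Th D (s0 : R)))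
      = Amul (Th D (c : R)) (Amul (Th D a0) (Th D s)) := by
    rw [← Th_mul, ← Th_mul, ← Th_mul, ← Th_mul, hc]
  have hcan : Amul (Th D a) (Th D (s0 : R)) = Amul (Th D a0) (Th D s) :=
    Amul_cancel_left (Th_units D c.2) hTh
  show Amul (Amul (Th D a0) (Ainv (Th D (s0 : R)))) (Th D s) = Th D a
  rw [Amul_assoc, ← Acomm_inv (Th_units D s0.2) (Th_comm D s ((s0 : R))), ← Amul_assoc,
    ← hcan, Amul_assoc, Amul_Ainv (Th_units D s0.2), Amul_one]

lemma ThL_alg (x : R) : ThL D (lm D x) = Th D x := by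
  have h : lm D x * lm D 1 = lm D x := by rw [map_one, mul_one]
  have := ThL_spec D (one_mem D.S) h
  rw [Th_one, Amul_one] at this
  exact this

lemma ThL_Th_comm (r : R) (w : Localization D.S) :
    Amul (Th D r) (ThL D w) = Amul (ThL D w) (Th D r) := by
  unfold ThL
  exact Acomm_mul (Th_comm D r _) (Acomm_inv (Th_units D (IsLocalization.sec D.S w).2.2)
    (Th_comm D r _))

lemma ThL_mul (z w : Localization D.S) : ThL D (z * w) = Amul (ThL D z) (ThL D w) := by
  obtain ⟨a, s, hs, hz⟩ := exists_rep D z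
  obtain ⟨b, u, hu, hw⟩ := exists_rep D w
  have hz' : z * lm D s = lm D a := by rw [mul_comm] at hz; exact hz
  have hw' : w * lm D u = lm D b := by rw [mul_comm] at hw; exact hw
  have hzw : (z * w) * lm D (s * u) = lm D (a * b) := by
    rw [map_mul, map_mul]
    calc z * w * (lm D s * lm D u) = (z * lm D s) * (w * lm D u) := by ring
      _ = lm D a * lm D b := by rw [hz', hw']
  have h1 := ThL_spec D (mul_mem hs hu) hzw
  have h2 : Amul (Amul (ThL D z) (ThL D w)) (Th D (s * u)) = Th D (a * b) := by
    rw [Th_mul D s u, Th_mul D a b]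
    rw [Amul_exchange (ThL_Th_comm D s w).symm]
    rw [ThL_spec D hs hz', ThL_spec D hu hw']
  exact Amul_cancel (Th_units D (mul_mem hs hu)) (h1.trans h2.symm)

lemma ThL_add (z w : Localization D.S) : ThL D (z + w) = ThL D z + ThL D w := by
  obtain ⟨a, s, hs, hz⟩ := exists_rep D z
  obtain ⟨b, u, hu, hw⟩ := exists_rep D w
  have hz' : z * lm D s = lm D a := by rw [mul_comm] at hz; exact hz
  have hw' : w * lm D u = lm D b := by rw [mul_comm] at hw; exact hw
  have hzw : (z + w) * lm D (s * u) = lm D (a * u + b * s) := by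
    rw [map_mul, map_add, map_mul, map_mul]
    calc (z + w) * (lm D s * lm D u)
        = (z * lm D s) * lm D u + (w * lm D u) * lm D s := by ring
      _ = lm D a * lm D u + lm D b * lm D s := by rw [hz', hw']
  have h1 := ThL_spec D (mul_mem hs hu) hzw
  have h2 : Amul (ThL D z + ThL D w) (Th D (s * u)) = Th D (a * u + b * s) := by
    rw [add_Amul, Th_add, Th_mul D a u, Th_mul D b s, Th_mul D s u]
    congr 1
    · calc Amul (ThL D z) (Amul (Th D s) (Th D u))
          = Amul (Amul (ThL D z) (Th D s)) (Th D u) := (Amul_assoc _ _ _).symm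
        _ = Amul (Th D a) (Th D u) := by rw [ThL_spec D hs hz']
    · calc Amul (ThL D w) (Amul (Th D s) (Th D u))
          = Amul (ThL D w) (Amul (Th D u) (Th D s)) := by rw [Th_comm D s u]
        _ = Amul (Amul (ThL D w) (Th D u)) (Th D s) := (Amul_assoc _ _ _).symm
        _ = Amul (Th D b) (Th D s) := by rw [ThL_spec D hu hw']
  exact Amul_cancel (Th_units D (mul_mem hs hu)) (h1.trans h2.symm)

/-- coherence of the rows -/
def Coh (D : Data C R) (f : ℕ → ℕ → Localization D.S) : Prop :=
  ∀ n k, f n k = (⇑(σL D))^[n] (f 0 k)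

lemma Coh_Th (x : R) : Coh D (Th D x) := by
  intro n k
  show lm D ((⇑D.σ)^[n] (D.δ k x)) = (⇑(σL D))^[n] (lm D ((⇑D.σ)^[0] (D.δ k x)))
  rw [Function.iterate_zero_apply, σL_iter_alg]

lemma Coh_Amul {f g : ℕ → ℕ → Localization D.S} (hf : Coh D f) (hg : Coh D g) :
    Coh D (Amul f g) := by
  intro n k
  show ∑ i ∈ range (k+1), f (n+i) (k-i) * g n i
      = (⇑(σL D))^[n] (∑ i ∈ range (k+1), f (0+i) (k-i) * g 0 i)
  rw [eqv_iter_sum]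
  apply Finset.sum_congr rfl
  intro i _
  rw [eqv_iter_mul, hf (n+i) (k-i), hg n i, hf (0+i) (k-i), zero_add,
    ← Function.iterate_add_apply]

lemma Coh_Ainv {f : ℕ → ℕ → Localization D.S} (hf : Coh D f)
    (hu : ∀ n, IsUnit (f n 0)) : Coh D (Ainv f) := by
  set g : ℕ → ℕ → Localization D.S := fun n k => (⇑(σL D))^[n] (Ainv f 0 k) with hgdef
  have hfg : Amul f g = Aone := by
    funext n k
    show ∑ i ∈ range (k+1), f (n+i) (k-i) * g n i = Aone n k
    have : ∑ i ∈ range (k+1), f (n+i) (k-i) * g n i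
        = (⇑(σL D))^[n] (∑ i ∈ range (k+1), f (0+i) (k-i) * Ainv f 0 i) := by
      rw [eqv_iter_sum]
      apply Finset.sum_congr rfl
      intro i _
      rw [eqv_iter_mul, hf (n+i) (k-i), hf (0+i) (k-i), zero_add,
        ← Function.iterate_add_apply]
    rw [this]
    have hone : ∑ i ∈ range (k+1), f (0+i) (k-i) * Ainv f 0 i = Aone 0 k := by
      have := congrFun (congrFun (Amul_Ainv hu) 0) k
      exact this
    rw [hone]
    cases k with
    | zero => simp [Aone, eqv_iter_one]
    | succ k => simp [Aone, eqv_iter_zero]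
  have : g = Ainv f := Amul_cancel_left hu (hfg.trans (Amul_Ainv hu).symm)
  intro n k
  rw [← this]
  rfl

lemma Coh_ThL (z : Localization D.S) : Coh D (ThL D z) := by
  unfold ThL
  exact Coh_Amul D (Coh_Th D _)
    (Coh_Ainv D (Coh_Th D _) (Th_units D (IsLocalization.sec D.S z).2.2))

/-- the extended operators -/
noncomputable def δL (D : Data C R) (k : ℕ) (z : Localization D.S) : Localization D.S :=
  ThL D z 0 k

lemma ThL_eval (z : Localization D.S) (n k : ℕ) :
    ThL D z n k = (⇑(σL D))^[n] (δL D k z) := Coh_ThL D z n k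



lemma δL_alg (k : ℕ) (x : R) : δL D k (lm D x) = lm D (D.δ k x) := by
  show ThL D (lm D x) 0 k = _
  rw [ThL_alg]
  show lm D ((⇑D.σ)^[0] (D.δ k x)) = _
  rw [Function.iterate_zero_apply]

lemma δL_add (k : ℕ) (z w : Localization D.S) :
    δL D k (z + w) = δL D k z + δL D k w := by
  show ThL D (z + w) 0 k = _
  rw [ThL_add]
  rfl

lemma δL_zero (k : ℕ) : δL D k 0 = 0 := by
  have h : (0 : Localization D.S) = lm D 0 := by rw [map_zero]
  rw [h, δL_alg, δ_zero, map_zero]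

lemma δL_sum (k : ℕ) {ι : Type*} (s : Finset ι) (f : ι → Localization D.S) :
    δL D k (∑ i ∈ s, f i) = ∑ i ∈ s, δL D k (f i) := by
  induction s using Finset.cons_induction with
  | empty => simpa using δL_zero D k
  | cons a s ha ih => rw [Finset.sum_cons, Finset.sum_cons, δL_add, ih]

lemma δL_leib (k : ℕ) (z w : Localization D.S) :
    δL D k (z * w) = ∑ i ∈ range (k+1), (⇑(σL D))^[i] (δL D (k-i) z) * δL D i w := by
  show ThL D (z * w) 0 k = _
  rw [ThL_mul]
  show ∑ i ∈ range (k+1), ThL D z (0+i) (k-i) * ThL D w 0 i = _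
  apply Finset.sum_congr rfl
  intro i _
  rw [zero_add, ThL_eval]
  rfl

lemma δL_zeroth (z : Localization D.S) : δL D 0 z = z := by
  obtain ⟨a, s, hs, hz⟩ := exists_rep D z
  have hz' : z * lm D s = lm D a := by rw [mul_comm] at hz; exact hz
  have h := congrFun (congrFun (ThL_spec D hs hz') 0) 0
  have hL : (Amul (ThL D z) (Th D s)) 0 0 = δL D 0 z * lm D s := by
    show ∑ i ∈ range 1, ThL D z (0+i) (0-i) * Th D s 0 i = _
    rw [Finset.sum_range_one]
    show ThL D z (0+0) (0-0) * lm D ((⇑D.σ)^[0] (D.δ 0 s)) = _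
    rw [Function.iterate_zero_apply, D.h0]
    rfl
  have hR : Th D a 0 0 = z * lm D s := by
    show lm D ((⇑D.σ)^[0] (D.δ 0 a)) = _
    rw [Function.iterate_zero_apply, D.h0, ← hz']
  rw [hL, hR] at h
  exact (IsLocalization.map_units _ (⟨s, hs⟩ : D.S)).mul_right_cancel h

/-- the alg-left Leibniz rule -/
lemma δL_alg_mul (B : ℕ) (w : R) (v : Localization D.S) :
    δL D B (lm D w * v)
      = ∑ β ∈ range (B+1), lm D ((⇑D.σ)^[β] (D.δ (B-β) w)) * δL D β v := by
  rw [δL_leib]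
  apply Finset.sum_congr rfl
  intro β hβ
  rw [δL_alg, σL_iter_alg]

/-- the extension of the normalization axiom for δ¹ -/
lemma δL_h1 (z : Localization D.S) :
    δL D 1 z = lm D (algebraMap C R (D.q - 1)⁻¹ * (↑D.t⁻¹ : R)) * (σL D z - z) := by
  set cf : R := algebraMap C R (D.q - 1)⁻¹ * (↑D.t⁻¹ : R) with hcf
  obtain ⟨a, s, hs, hz⟩ := exists_rep D z
  have hz' : z * lm D s = lm D a := by rw [mul_comm] at hz; exact hz
  have E1 : lm D (D.δ 1 a) = lm D (D.δ 1 s) * z + lm D (D.σ s) * δL D 1 z := by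
    have h := δL_alg_mul D 1 s z
    rw [hz, δL_alg] at h
    rw [Finset.sum_range_succ, Finset.sum_range_one] at h
    simp only [Function.iterate_zero_apply, Function.iterate_one, Nat.sub_zero,
      Nat.sub_self] at h
    rw [D.h0, δL_zeroth] at h
    exact h
  have E2 : lm D (D.δ 1 a) = lm D cf * (lm D (D.σ a) - lm D a) := by
    rw [D.h1 a, ← hcf, map_mul, map_sub]
  have E3 : lm D (D.δ 1 s) = lm D cf * (lm D (D.σ s) - lm D s) := by
    rw [D.h1 s, ← hcf, map_mul, map_sub]
  have E4 : lm D a = z * lm D s := hz'.symm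
  have E5 : lm D (D.σ a) = σL D z * lm D (D.σ s) := by
    rw [← σL_alg, ← hz', map_mul, σL_alg]
  have hu : IsUnit (lm D (D.σ s)) := D.hS s hs
  apply hu.mul_right_cancel
  linear_combination (-1 : Localization D.S) * E1 + E2 + (-z) * E3
    + (-(lm D cf)) * E4 + (lm D cf) * E5


/-- A finite "jet functional" with coefficients in `R` which vanishes on the image
of `R` vanishes identically on the localization. -/
lemma T0gen : ∀ (M : ℕ) {ι : Type*} (T : Finset ι) (lv : ι → ℕ) (c : ι → R),
    (∀ m ∈ T, lv m ≤ M) →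
    (∀ x : R, ∑ m ∈ T, lm D (c m) * lm D (D.δ (lv m) x) = 0) →
    ∀ v : Localization D.S, ∑ m ∈ T, lm D (c m) * δL D (lv m) v = 0 := by
  intro M
  induction M with
  | zero =>
      intro ι T lv c hbd hvan v
      obtain ⟨a, s, hs, hz⟩ := exists_rep D v
      have hlv : ∀ m ∈ T, lv m = 0 := fun m hm => Nat.le_zero.mp (hbd m hm)
      have key : (∑ m ∈ T, lm D (c m)) * lm D a = 0 := by
        calc (∑ m ∈ T, lm D (c m)) * lm D a
            = ∑ m ∈ T, lm D (c m) * lm D (D.δ (lv m) a) := by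
              rw [Finset.sum_mul]
              refine Finset.sum_congr rfl fun m hm => ?_
              rw [hlv m hm, D.h0]
          _ = 0 := hvan a
      have hv : ∑ m ∈ T, lm D (c m) * δL D (lv m) v = (∑ m ∈ T, lm D (c m)) * v := by
        rw [Finset.sum_mul]
        refine Finset.sum_congr rfl fun m hm => ?_
        rw [hlv m hm, δL_zeroth]
      rw [hv]
      have hu : IsUnit (lm D s) := IsLocalization.map_units _ (⟨s, hs⟩ : D.S)
      apply hu.mul_left_cancel
      rw [mul_zero]
      calc lm D s * ((∑ m ∈ T, lm D (c m)) * v)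
          = (∑ m ∈ T, lm D (c m)) * (lm D s * v) := by ring
        _ = (∑ m ∈ T, lm D (c m)) * lm D a := by rw [hz]
        _ = 0 := key
  | succ M IH =>
      intro ι T lv c hbd hvan v
      have EQ : ∀ (w : R) (u : Localization D.S),
          ∑ m ∈ T, lm D (c m) * δL D (lv m) (lm D w * u)
            = lm D ((⇑D.σ)^[M+1] w) * ∑ m ∈ T, lm D (c m) * δL D (lv m) u := by
        intro w
        set Sg : Finset (Σ _ : ι, ℕ) := T.sigma (fun m => range (lv m + 1)) with hSg
        set Pfin : Finset ((Σ _ : ι, ℕ) ⊕ ι) :=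
          (Sg.filter (fun p => p.2 < M+1)).disjSum (T.filter (fun m => lv m < M+1)) with hPfin
        set lv' : (Σ _ : ι, ℕ) ⊕ ι → ℕ := Sum.elim (fun p => p.2) lv with hlv'
        set c' : (Σ _ : ι, ℕ) ⊕ ι → R :=
          Sum.elim (fun p => c p.1 * (⇑D.σ)^[p.2] (D.δ (lv p.1 - p.2) w))
            (fun m => -((⇑D.σ)^[M+1] w * c m)) with hc'
        have REARR : ∀ u : Localization D.S,
            ∑ m ∈ T, lm D (c m) * δL D (lv m) (lm D w * u)
              = lm D ((⇑D.σ)^[M+1] w) * (∑ m ∈ T, lm D (c m) * δL D (lv m) u)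
                + ∑ q ∈ Pfin, lm D (c' q) * δL D (lv' q) u := by
          intro u
          have lhs1 : ∑ m ∈ T, lm D (c m) * δL D (lv m) (lm D w * u)
              = ∑ p ∈ Sg, lm D (c p.1) * (lm D ((⇑D.σ)^[p.2] (D.δ (lv p.1 - p.2) w)) * δL D p.2 u) := by
            calc ∑ m ∈ T, lm D (c m) * δL D (lv m) (lm D w * u)
                = ∑ m ∈ T, ∑ β ∈ range (lv m + 1),
                    lm D (c m) * (lm D ((⇑D.σ)^[β] (D.δ (lv m - β) w)) * δL D β u) := by
                  refine Finset.sum_congr rfl fun m hm => ?_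
                  rw [δL_alg_mul, Finset.mul_sum]
              _ = ∑ p ∈ Sg, lm D (c p.1) * (lm D ((⇑D.σ)^[p.2] (D.δ (lv p.1 - p.2) w)) * δL D p.2 u) :=
                  Finset.sum_sigma' T _ _
          have hsplit := Finset.sum_filter_add_sum_filter_not Sg (fun p => p.2 < M+1)
            (fun p => lm D (c p.1) * (lm D ((⇑D.σ)^[p.2] (D.δ (lv p.1 - p.2) w)) * δL D p.2 u))
          have hB : ∑ p ∈ Sg.filter (fun p => ¬ p.2 < M+1),
              lm D (c p.1) * (lm D ((⇑D.σ)^[p.2] (D.δ (lv p.1 - p.2) w)) * δL D p.2 u)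
              = ∑ m ∈ T.filter (fun m => ¬ lv m < M+1),
                  lm D ((⇑D.σ)^[M+1] w) * (lm D (c m) * δL D (lv m) u) := by
            apply Finset.sum_nbij' (i := fun p => p.1) (j := fun m => (⟨m, M+1⟩ : Σ _ : ι, ℕ))
            · intro p hp
              simp only [hSg, Finset.mem_filter, Finset.mem_sigma, Finset.mem_range] at hp ⊢
              have := hbd p.1 hp.1.1
              exact ⟨hp.1.1, by omega⟩
            · intro m hm
              simp only [hSg, Finset.mem_filter, Finset.mem_sigma, Finset.mem_range] at hm ⊢
              have := hbd m hm.1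
              exact ⟨⟨hm.1, by omega⟩, by omega⟩
            · intro p hp
              obtain ⟨m, β⟩ := p
              simp only [hSg, Finset.mem_filter, Finset.mem_sigma, Finset.mem_range] at hp
              have hb := hbd m hp.1.1
              have : (M+1 : ℕ) = β := by omega
              exact congrArg (Sigma.mk m) this
            · intro m hm
              rfl
            · intro p hp
              obtain ⟨m, β⟩ := p
              simp only [hSg, Finset.mem_filter, Finset.mem_sigma, Finset.mem_range] at hp
              have hb := hbd m hp.1.1
              have hβ : β = M+1 := by omega
              have hlvm : lv m = M+1 := by omega
              subst hβ
              have h0 : lv m - (M+1) = 0 := by omega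
              rw [h0, D.h0, hlvm]
              ring
          have hPsum : ∑ q ∈ Pfin, lm D (c' q) * δL D (lv' q) u
              = (∑ p ∈ Sg.filter (fun p => p.2 < M+1),
                  lm D (c p.1) * (lm D ((⇑D.σ)^[p.2] (D.δ (lv p.1 - p.2) w)) * δL D p.2 u))
                - ∑ m ∈ T.filter (fun m => lv m < M+1),
                    lm D ((⇑D.σ)^[M+1] w) * (lm D (c m) * δL D (lv m) u) := by
            rw [hPfin, Finset.sum_disjSum]
            congr 1
            · refine Finset.sum_congr rfl fun p hp => ?_
              simp only [hc', hlv', Sum.elim_inl, map_mul]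
              ring
            · rw [← Finset.sum_neg_distrib]
              refine Finset.sum_congr rfl fun m hm => ?_
              simp only [hc', hlv', Sum.elim_inr, map_neg, map_mul]
              ring
          have hWsplit : lm D ((⇑D.σ)^[M+1] w) * (∑ m ∈ T, lm D (c m) * δL D (lv m) u)
              = (∑ m ∈ T.filter (fun m => lv m < M+1),
                  lm D ((⇑D.σ)^[M+1] w) * (lm D (c m) * δL D (lv m) u))
                + ∑ m ∈ T.filter (fun m => ¬ lv m < M+1),
                  lm D ((⇑D.σ)^[M+1] w) * (lm D (c m) * δL D (lv m) u) := by
            rw [Finset.mul_sum]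
            exact (Finset.sum_filter_add_sum_filter_not T _ _).symm
          rw [lhs1, ← hsplit, hB, hPsum, hWsplit]
          ring
        have hbd' : ∀ q ∈ Pfin, lv' q ≤ M := by
          intro q hq
          rcases q with p | m
          · simp only [hPfin, Finset.mem_disjSum] at hq
            rcases hq with ⟨p', hp', he⟩ | ⟨m', hm', he⟩
            · cases he
              simp only [Finset.mem_filter] at hp'
              simp only [hlv', Sum.elim_inl]
              omega
            · cases he
          · simp only [hPfin, Finset.mem_disjSum] at hq
            rcases hq with ⟨p', hp', he⟩ | ⟨m', hm', he⟩
            · cases he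
            · cases he
              simp only [Finset.mem_filter] at hm'
              simp only [hlv', Sum.elim_inr]
              omega
        have hvan' : ∀ x : R, ∑ q ∈ Pfin, lm D (c' q) * lm D (D.δ (lv' q) x) = 0 := by
          intro x
          have h1 := REARR (lm D x)
          have h2 : ∑ m ∈ T, lm D (c m) * δL D (lv m) (lm D w * lm D x) = 0 := by
            have : lm D w * lm D x = lm D (w * x) := (map_mul _ _ _).symm
            rw [this]
            calc ∑ m ∈ T, lm D (c m) * δL D (lv m) (lm D (w * x))
                = ∑ m ∈ T, lm D (c m) * lm D (D.δ (lv m) (w * x)) := by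
                  refine Finset.sum_congr rfl fun m hm => ?_
                  rw [δL_alg]
              _ = 0 := hvan (w * x)
          have h3 : ∑ m ∈ T, lm D (c m) * δL D (lv m) (lm D x) = 0 := by
            calc ∑ m ∈ T, lm D (c m) * δL D (lv m) (lm D x)
                = ∑ m ∈ T, lm D (c m) * lm D (D.δ (lv m) x) := by
                  refine Finset.sum_congr rfl fun m hm => ?_
                  rw [δL_alg]
              _ = 0 := hvan x
          rw [h2, h3, mul_zero, zero_add] at h1
          rw [← h1.symm]
          refine Finset.sum_congr rfl fun q hq => ?_
          rw [δL_alg]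
        have hzero' := IH Pfin lv' c' hbd' hvan'
        intro u
        rw [REARR u, hzero' u, add_zero]
      obtain ⟨a, s, hs, hz⟩ := exists_rep D v
      have h1 := EQ s v
      have h2 : ∑ m ∈ T, lm D (c m) * δL D (lv m) (lm D s * v) = 0 := by
        rw [hz]
        calc ∑ m ∈ T, lm D (c m) * δL D (lv m) (lm D a)
            = ∑ m ∈ T, lm D (c m) * lm D (D.δ (lv m) a) := by
              refine Finset.sum_congr rfl fun m hm => ?_
              rw [δL_alg]
          _ = 0 := hvan a
      rw [h2] at h1
      have hu : IsUnit (lm D ((⇑D.σ)^[M+1] s)) := units_iter D (M+1) hs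
      apply hu.mul_left_cancel
      rw [mul_zero, ← h1]


/-- iterativity of the extended operators -/
lemma δL_iter : ∀ (n i j : ℕ), i + j = n → ∀ v : Localization D.S,
    δL D i (δL D j v) = lm D (algebraMap C R (qBinom D.q n i)) * δL D n v := by
  intro n
  induction n using Nat.strong_induction_on with
  | _ n IH =>
    intro i j hij v
    rcases Nat.eq_zero_or_pos i with hi0 | hipos
    · subst hi0
      rw [δL_zeroth]
      have h1 : qBinom D.q n 0 = 1 := by cases n <;> rfl
      rw [h1, map_one, map_one, one_mul]
      have hj : j = n := by omega
      rw [hj]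
    · have Ealg : ∀ x : R, δL D i (δL D j (lm D x))
          = lm D (algebraMap C R (qBinom D.q n i)) * δL D n (lm D x) := by
        intro x
        rw [δL_alg, δL_alg, D.hiter i j x, hij, map_mul, δL_alg]
      have EXP : ∀ (w : R) (u : Localization D.S),
          δL D i (δL D j (lm D w * u))
            = ∑ b ∈ range (j+1), ∑ e ∈ range (i+1),
                lm D ((⇑D.σ)^[e] (D.δ (i-e) ((⇑D.σ)^[b] (D.δ (j-b) w))))
                  * δL D e (δL D b u) := by
        intro w u
        rw [δL_alg_mul, δL_sum]
        refine Finset.sum_congr rfl fun b hb => ?_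
        rw [δL_alg_mul]
      set lvF : (ℕ × ℕ) ⊕ ℕ → ℕ := Sum.elim (fun p => p.2 + p.1) id with hlvF
      set Tf : Finset ((ℕ × ℕ) ⊕ ℕ) :=
        ((range (j+1) ×ˢ range (i+1)).erase (j, i)).disjSum (range n) with hTf
      set cF : R → ((ℕ × ℕ) ⊕ ℕ) → R := fun w => Sum.elim
          (fun p => algebraMap C R (qBinom D.q (p.2+p.1) p.2)
            * (⇑D.σ)^[p.2] (D.δ (i-p.2) ((⇑D.σ)^[p.1] (D.δ (j-p.1) w))))
          (fun B => -(algebraMap C R (qBinom D.q n i) * (⇑D.σ)^[B] (D.δ (n-B) w))) with hcF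
      have IDENT : ∀ (w : R) (u : Localization D.S),
          δL D i (δL D j (lm D w * u))
              - lm D (algebraMap C R (qBinom D.q n i)) * δL D n (lm D w * u)
            = lm D ((⇑D.σ)^[n] w)
                * (δL D i (δL D j u) - lm D (algebraMap C R (qBinom D.q n i)) * δL D n u)
              + ∑ q ∈ Tf, lm D (cF w q) * δL D (lvF q) u := by
        intro w u
        have hEXP := EXP w u
        have hP : ∑ b ∈ range (j+1), ∑ e ∈ range (i+1),
              lm D ((⇑D.σ)^[e] (D.δ (i-e) ((⇑D.σ)^[b] (D.δ (j-b) w)))) * δL D e (δL D b u)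
            = ∑ p ∈ range (j+1) ×ˢ range (i+1),
                lm D ((⇑D.σ)^[p.2] (D.δ (i-p.2) ((⇑D.σ)^[p.1] (D.δ (j-p.1) w))))
                  * δL D p.2 (δL D p.1 u) :=
          (Finset.sum_product' (s := range (j+1)) (t := range (i+1)) (f := fun b e =>
            lm D ((⇑D.σ)^[e] (D.δ (i-e) ((⇑D.σ)^[b] (D.δ (j-b) w)))) * δL D e (δL D b u))).symm
        have hmemji : (j, i) ∈ range (j+1) ×ˢ range (i+1) := by
          rw [Finset.mem_product]
          constructor <;> (rw [Finset.mem_range]; omega)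
        have hsplit := Finset.sum_erase_add (range (j+1) ×ˢ range (i+1))
          (fun p => lm D ((⇑D.σ)^[p.2] (D.δ (i-p.2) ((⇑D.σ)^[p.1] (D.δ (j-p.1) w))))
            * δL D p.2 (δL D p.1 u)) hmemji
        have htop : lm D ((⇑D.σ)^[i] (D.δ (i-i) ((⇑D.σ)^[j] (D.δ (j-j) w))))
              * δL D i (δL D j u)
            = lm D ((⇑D.σ)^[n] w) * δL D i (δL D j u) := by
          rw [Nat.sub_self, Nat.sub_self, D.h0, D.h0, ← Function.iterate_add_apply, hij]
        have herase : ∑ p ∈ (range (j+1) ×ˢ range (i+1)).erase (j, i),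
              lm D ((⇑D.σ)^[p.2] (D.δ (i-p.2) ((⇑D.σ)^[p.1] (D.δ (j-p.1) w))))
                * δL D p.2 (δL D p.1 u)
            = ∑ p ∈ (range (j+1) ×ˢ range (i+1)).erase (j, i),
                lm D (cF w (Sum.inl p)) * δL D (p.2 + p.1) u := by
          refine Finset.sum_congr rfl fun p hp => ?_
          obtain ⟨b, e⟩ := p
          have hne := (Finset.mem_erase.mp hp).1
          have hmem := (Finset.mem_erase.mp hp).2
          have h1 := Finset.mem_range.mp (Finset.mem_product.mp hmem).1
          have h2 := Finset.mem_range.mp (Finset.mem_product.mp hmem).2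
          have hlt : e + b < n := by
            rcases Nat.lt_or_ge (e+b) n with h | h
            · exact h
            · exfalso
              apply hne
              have hbj : b = j ∧ e = i := by omega
              exact Prod.ext hbj.1 hbj.2
          rw [IH (e+b) hlt e b rfl u]
          simp only [hcF, Sum.elim_inl, map_mul]
          ring
        have hδn : δL D n (lm D w * u)
            = (∑ B ∈ range n, lm D ((⇑D.σ)^[B] (D.δ (n-B) w)) * δL D B u)
              + lm D ((⇑D.σ)^[n] w) * δL D n u := by
          rw [δL_alg_mul, Finset.sum_range_succ, Nat.sub_self, D.h0]
        have hTfsum : ∑ q ∈ Tf, lm D (cF w q) * δL D (lvF q) u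
            = (∑ p ∈ (range (j+1) ×ˢ range (i+1)).erase (j, i),
                lm D (cF w (Sum.inl p)) * δL D (p.2 + p.1) u)
              - ∑ B ∈ range n,
                  lm D (algebraMap C R (qBinom D.q n i))
                    * (lm D ((⇑D.σ)^[B] (D.δ (n-B) w)) * δL D B u) := by
          rw [hTf, Finset.sum_disjSum, sub_eq_add_neg]
          congr 1
          rw [← Finset.sum_neg_distrib]
          refine Finset.sum_congr rfl fun B hB => ?_
          simp only [hcF, hlvF, Sum.elim_inr, map_neg, map_mul, id_eq]
          ring
        have hsplit2 : ∑ p ∈ range (j+1) ×ˢ range (i+1),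
              lm D ((⇑D.σ)^[p.2] (D.δ (i-p.2) ((⇑D.σ)^[p.1] (D.δ (j-p.1) w))))
                * δL D p.2 (δL D p.1 u)
            = (∑ p ∈ (range (j+1) ×ˢ range (i+1)).erase (j, i),
                lm D ((⇑D.σ)^[p.2] (D.δ (i-p.2) ((⇑D.σ)^[p.1] (D.δ (j-p.1) w))))
                  * δL D p.2 (δL D p.1 u))
              + lm D ((⇑D.σ)^[n] w) * δL D i (δL D j u) := by
          rw [← hsplit]
          congr 1
        rw [hEXP, hP, hsplit2, herase, hδn, hTfsum]
        rw [mul_add, Finset.mul_sum]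
        ring
      have hbdF : ∀ q ∈ Tf, lvF q ≤ n := by
        intro q hq
        rcases q with p | B
        · simp only [hTf, Finset.mem_disjSum] at hq
          rcases hq with ⟨p', hp', he⟩ | ⟨B', hB', he⟩
          · cases he
            have hmem := (Finset.mem_erase.mp hp').2
            have h1 := Finset.mem_range.mp (Finset.mem_product.mp hmem).1
            have h2 := Finset.mem_range.mp (Finset.mem_product.mp hmem).2
            simp only [hlvF, Sum.elim_inl]
            omega
          · cases he
        · simp only [hTf, Finset.mem_disjSum] at hq
          rcases hq with ⟨p', hp', he⟩ | ⟨B', hB', he⟩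
          · cases he
          · cases he
            simp only [hlvF, Sum.elim_inr, id_eq]
            have := Finset.mem_range.mp hB'
            omega
      have EQ : ∀ (w : R) (u : Localization D.S),
          δL D i (δL D j (lm D w * u))
              - lm D (algebraMap C R (qBinom D.q n i)) * δL D n (lm D w * u)
            = lm D ((⇑D.σ)^[n] w)
                * (δL D i (δL D j u) - lm D (algebraMap C R (qBinom D.q n i)) * δL D n u) := by
        intro w u
        have hvanF : ∀ x : R, ∑ q ∈ Tf, lm D (cF w q) * lm D (D.δ (lvF q) x) = 0 := by
          intro x
          have h1 := IDENT w (lm D x)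
          have h2 : lm D w * lm D x = lm D (w * x) := (map_mul _ _ _).symm
          rw [h2] at h1
          rw [sub_eq_zero.mpr (Ealg (w*x)), sub_eq_zero.mpr (Ealg x), mul_zero, zero_add] at h1
          rw [← h1.symm]
          refine Finset.sum_congr rfl fun q hq => ?_
          rw [δL_alg]
        have hzeroF := T0gen D n Tf lvF (cF w) hbdF hvanF u
        rw [IDENT w u, hzeroF, add_zero]
      obtain ⟨a, s, hs, hz⟩ := exists_rep D v
      have h1 := EQ s v
      rw [hz, sub_eq_zero.mpr (Ealg a)] at h1
      have hu : IsUnit (lm D ((⇑D.σ)^[n] s)) := units_iter D n hs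
      have h2 : δL D i (δL D j v) - lm D (algebraMap C R (qBinom D.q n i)) * δL D n v = 0 := by
        apply hu.mul_left_cancel
        rw [mul_zero, ← h1]
      exact sub_eq_zero.mp h2

end IterQ


/-- Let `R` be an iterative q-difference ring (axioms (1)–(5) of Hardouin's
Definition 2.4, relative to `σ_q` and an invertible `t`), and `S ⊆ R` a
multiplicative set such that `σ_q(s)` becomes invertible in `S⁻¹R` for every
`s ∈ S`.  Then `S⁻¹R` carries a unique iterative q-difference structure
`(σ', δ'^(k))` such that the localization map commutes with `σ_q` and all the
`δ^(k)`. -/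
theorem iterQDiff_localization {C R : Type*} [Field C] [CommRing R] [Algebra C R]
    (q : C) (N : ℕ) (hN : 1 < N) (hq : IsPrimitiveRoot q N)
    (t : Rˣ) (σ : R ≃+* R)
    (hσC : ∀ c : C, σ (algebraMap C R c) = algebraMap C R c)
    (hσt : σ (t : R) = algebraMap C R q * t)
    (δ : ℕ → R → R)
    (h0 : ∀ x, δ 0 x = x)
    (h1 : ∀ x, δ 1 x = algebraMap C R (q - 1)⁻¹ * (↑t⁻¹ : R) * (σ x - x))
    (hadd : ∀ k x y, δ k (x + y) = δ k x + δ k y)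
    (hleib : ∀ k x y, δ k (x * y)
      = ∑ i ∈ Finset.range (k + 1), (⇑σ)^[i] (δ (k - i) x) * δ i y)
    (hiter : ∀ i j x, δ i (δ j x) = algebraMap C R (qBinom q (i + j) i) * δ (i + j) x)
    (S : Submonoid R)
    (hS : ∀ s ∈ S, IsUnit (algebraMap R (Localization S) (σ s))) :
    ∃! σδ : (Localization S ≃+* Localization S) × (ℕ → Localization S → Localization S),
      -- the localization map `R → S⁻¹R` commutes with the structures
      (∀ x : R, σδ.1 (algebraMap R (Localization S) x)
          = algebraMap R (Localization S) (σ x))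
      ∧ (∀ (k : ℕ) (x : R), σδ.2 k (algebraMap R (Localization S) x)
          = algebraMap R (Localization S) (δ k x))
      -- and `(σ', δ')` is an iterative q-difference structure on `S⁻¹R`
      ∧ (∀ x, σδ.2 0 x = x)
      ∧ (∀ x, σδ.2 1 x
          = algebraMap R (Localization S) (algebraMap C R (q - 1)⁻¹ * (↑t⁻¹ : R))
            * (σδ.1 x - x))
      ∧ (∀ k x y, σδ.2 k (x + y) = σδ.2 k x + σδ.2 k y)
      ∧ (∀ k x y, σδ.2 k (x * y)
          = ∑ i ∈ Finset.range (k + 1), (⇑σδ.1)^[i] (σδ.2 (k - i) x) * σδ.2 i y)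
      ∧ (∀ i j x, σδ.2 i (σδ.2 j x)
          = algebraMap R (Localization S) (algebraMap C R (qBinom q (i + j) i))
            * σδ.2 (i + j) x) := by
  classical
  set D : IterQ.Data C R :=
    ⟨q, N, hN, hq, t, σ, hσC, hσt, δ, h0, h1, hadd, hleib, hiter, S, hS⟩ with hD
  refine ⟨⟨IterQ.σL D, IterQ.δL D⟩,
    ⟨fun x => IterQ.σL_alg D x,
     fun k x => IterQ.δL_alg D k x,
     fun z => IterQ.δL_zeroth D z,
     fun z => IterQ.δL_h1 D z,
     fun k z w => IterQ.δL_add D k z w,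
     fun k z w => IterQ.δL_leib D k z w,
     fun i j z => IterQ.δL_iter D (i+j) i j rfl z⟩, ?_⟩
  rintro ⟨σ1, d⟩ ⟨hσc, hδc, hd0, hd1, hdadd, hdleib, hditer⟩
  dsimp only at hσc hδc hd0 hd1 hdadd hdleib hditer
  have hσ : σ1 = IterQ.σL D := by
    apply RingEquiv.ext
    intro z
    obtain ⟨a, s, hs, hz⟩ := IterQ.exists_rep D z
    have hu : IsUnit (IterQ.lm D (σ s)) := hS s hs
    apply hu.mul_left_cancel
    have e1 : IterQ.lm D (σ s) * σ1 z = IterQ.lm D (σ a) := by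
      rw [← hσc s, ← map_mul, hz, hσc a]
    have e2 : IterQ.lm D (σ s) * IterQ.σL D z = IterQ.lm D (σ a) := by
      rw [← IterQ.σL_alg D s, ← map_mul, hz, IterQ.σL_alg D a]
    rw [e1, e2]
  subst hσ
  have hδ : ∀ k z, d k z = IterQ.δL D k z := by
    intro k
    induction k using Nat.strong_induction_on with
    | _ k IH =>
      intro z
      obtain ⟨a, s, hs, hz⟩ := IterQ.exists_rep D z
      have hz' : z * IterQ.lm D s = IterQ.lm D a := by rw [mul_comm] at hz; exact hz
      have e1 : IterQ.lm D (δ k a)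
          = (∑ i ∈ Finset.range k,
              (⇑(IterQ.σL D))^[i+1] (d (k-(i+1)) z) * IterQ.lm D (δ (i+1) s))
            + d k z * IterQ.lm D s := by
        have h := hdleib k z (IterQ.lm D s)
        rw [hz', hδc k a] at h
        rw [Finset.sum_range_succ'] at h
        simp only [Function.iterate_zero_apply] at h
        rw [hδc 0 s, h0 s] at h
        calc IterQ.lm D (δ k a)
            = (∑ i ∈ Finset.range k,
                (⇑(IterQ.σL D))^[i+1] (d (k-(i+1)) z) * d (i+1) (IterQ.lm D s))
              + d (k-0) z * IterQ.lm D s := h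
          _ = _ := by
              congr 1
              refine Finset.sum_congr rfl fun i hi => ?_
              rw [hδc (i+1) s]
      have e2 : IterQ.lm D (δ k a)
          = (∑ i ∈ Finset.range k,
              (⇑(IterQ.σL D))^[i+1] (IterQ.δL D (k-(i+1)) z) * IterQ.lm D (δ (i+1) s))
            + IterQ.δL D k z * IterQ.lm D s := by
        have h := IterQ.δL_leib D k z (IterQ.lm D s)
        rw [hz', IterQ.δL_alg D k a] at h
        rw [Finset.sum_range_succ'] at h
        simp only [Function.iterate_zero_apply] at h
        rw [IterQ.δL_alg D 0 s, D.h0 s] at h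
        calc IterQ.lm D (δ k a)
            = (∑ i ∈ Finset.range k,
                (⇑(IterQ.σL D))^[i+1] (IterQ.δL D (k-(i+1)) z) * IterQ.δL D (i+1) (IterQ.lm D s))
              + IterQ.δL D (k-0) z * IterQ.lm D s := h
          _ = _ := by
              congr 1
              refine Finset.sum_congr rfl fun i hi => ?_
              rw [IterQ.δL_alg D (i+1) s]
      have e3 : ∑ i ∈ Finset.range k,
            (⇑(IterQ.σL D))^[i+1] (d (k-(i+1)) z) * IterQ.lm D (δ (i+1) s)
          = ∑ i ∈ Finset.range k,
            (⇑(IterQ.σL D))^[i+1] (IterQ.δL D (k-(i+1)) z) * IterQ.lm D (δ (i+1) s) := by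
        refine Finset.sum_congr rfl fun i hi => ?_
        have := Finset.mem_range.mp hi
        rw [IH (k-(i+1)) (by omega) z]
      rw [e3] at e1
      have e4 := e1.symm.trans e2
      have e5 := add_left_cancel e4
      exact (IsLocalization.map_units (M := D.S) _ (⟨s, hs⟩ : D.S)).mul_right_cancel e5
  have : d = IterQ.δL D := funext fun k => funext fun z => hδ k z
  rw [this]
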